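/- For a strictly positive discrete probability distribution, the factorization property F over the cliques of a graph implies the global Markov property GM: if C separates A from B in the graph and P(X_V) = ∏_{K∈cliques} ψ_K(X_K) with ψ_K > 0, then P(X_{A∪B∪C}) = P(X_{A∪C}) P(X_{B∪C}) / P(X_C). -/

import Mathlib

open scoped Classical BigOperators

namespace TCherryPaper
variable {d : ℕ} {Ω : Type} [Fintype Ω]

/-- Marginal of `p` on coordinates `S`, evaluated at a full configuration `y`. -/
noncomputable def marg (p : (Fin d → Ω) → ℝ) (S : Finset (Fin d)) (y : Fin d → Ω) : ℝ :=
  ∑ x : Fin d → Ω, if ∀ i ∈ S, x i = y i then p x else 0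

/-- Shannon entropy of the marginal of `p` on coordinates `S` (as `-E_p[log P(X_S)]`). -/
noncomputable def Hm (p : (Fin d → Ω) → ℝ) (S : Finset (Fin d)) : ℝ :=
  -∑ y : Fin d → Ω, p y * Real.log (marg p S y)

/-- Information content `I(X_S) = ∑_{i∈S} H(X_i) − H(X_S)`. -/
noncomputable def info (p : (Fin d → Ω) → ℝ) (S : Finset (Fin d)) : ℝ :=
  (∑ i ∈ S, Hm p {i}) - Hm p S

/-- Kullback–Leibler divergence. -/
noncomputable def KL (p q : (Fin d → Ω) → ℝ) : ℝ :=
  ∑ y : Fin d → Ω, p y * Real.log (p y / q y)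

def IsProb (p : (Fin d → Ω) → ℝ) : Prop := (∀ y, 0 ≤ p y) ∧ ∑ y, p y = 1

/-- The `j`-th running-intersection separator of an ordered list of clusters. -/
def sep (Cs : List (Finset (Fin d))) (j : ℕ) : Finset (Fin d) :=
  Cs.getD j ∅ ∩ (Cs.take j).foldr (· ∪ ·) ∅

/-- Running intersection property. -/
def RIP (Cs : List (Finset (Fin d))) : Prop :=
  ∀ j, 1 ≤ j → j < Cs.length → ∃ i < j, sep Cs j ⊆ Cs.getD i ∅

/-- `𝒞` is the cluster set and `𝒮` the separator set of a junction tree. -/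
def IsJunctionTree (𝒞 𝒮 : Finset (Finset (Fin d))) : Prop :=
  (∀ C₁ ∈ 𝒞, ∀ C₂ ∈ 𝒞, C₁ ⊆ C₂ → C₁ = C₂) ∧
  ∃ Cs : List (Finset (Fin d)), Cs ≠ [] ∧ Cs.Nodup ∧ Cs.toFinset = 𝒞 ∧ RIP Cs ∧
    𝒮 = (((List.range Cs.length).filter (fun j => 1 ≤ j)).map (sep Cs)).toFinset

/-- `ν_S`: the number of clusters containing `S`. -/
def nu (𝒞 : Finset (Finset (Fin d))) (S : Finset (Fin d)) : ℕ :=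
  (𝒞.filter (fun C => S ⊆ C)).card

/-- The junction tree probability distribution. -/
noncomputable def jtPD (p : (Fin d → Ω) → ℝ) (𝒞 𝒮 : Finset (Finset (Fin d)))
    (y : Fin d → Ω) : ℝ :=
  (∏ C ∈ 𝒞, marg p C y) / ∏ S ∈ 𝒮, (marg p S y) ^ (nu 𝒞 S - 1)

/-- Conditional independence of `X_A` and `X_B` given `X_C`. -/
def CI (p : (Fin d → Ω) → ℝ) (A B C : Finset (Fin d)) : Prop :=
  ∀ y, marg p (A ∪ B ∪ C) y * marg p C y = marg p (A ∪ C) y * marg p (B ∪ C) y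


/-- `G` is a `k`-th order t-cherry tree on `Fin d`: there is a building order in which the
first `k-1` vertices form a complete graph and each later vertex is joined to exactly the
vertices of a `(k-1)`-clique among the earlier vertices. -/
def IsTCherry (k d : ℕ) (G : SimpleGraph (Fin d)) : Prop :=
  ∃ σ : Equiv.Perm (Fin d),
    (∀ i j : Fin d, i.val < k - 1 → j.val < k - 1 → i ≠ j → G.Adj (σ i) (σ j)) ∧
    (∀ j : Fin d, k - 1 ≤ j.val → ∃ N : Finset (Fin d),
      N.card = k - 1 ∧
      (∀ a ∈ N, ∃ i : Fin d, i.val < j.val ∧ σ i = a) ∧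
      (∀ a ∈ N, ∀ b ∈ N, a ≠ b → G.Adj a b) ∧
      (∀ i : Fin d, i.val < j.val → (G.Adj (σ j) (σ i) ↔ σ i ∈ N)) ∧
      (∀ a : Fin d, G.Adj (σ j) a → a ∈ N ∨ ∃ i : Fin d, j.val < i.val ∧ σ i = a))

/-- Chordality: every cycle of length greater than 3 has a chord. -/
def IsChordal {V : Type*} (G : SimpleGraph V) : Prop :=
  ∀ (u : V) (c : G.Walk u u), c.IsCycle → 3 < c.length →
    ∃ v w, v ∈ c.support ∧ w ∈ c.support ∧ G.Adj v w ∧ s(v, w) ∉ c.edges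

/-- A maximal clique (as a finset of vertices). -/
def MaxClique {V : Type*} (G : SimpleGraph V) (s : Finset V) : Prop :=
  G.IsClique ↑s ∧ ∀ t : Finset V, G.IsClique ↑t → s ⊆ t → s = t

/-- `C` separates `A` and `B` in `G`: every walk from `A` to `B` meets `C`. -/
def Separates {V : Type*} (G : SimpleGraph V) (A B C : Finset V) : Prop :=
  ∀ a ∈ A, ∀ b ∈ B, ∀ w : G.Walk a b, ∃ v ∈ w.support, v ∈ C


lemma marg_pos {d : ℕ} {Ω : Type} [Fintype Ω] (p : (Fin d → Ω) → ℝ)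
    (hppos : ∀ y, 0 < p y) (S : Finset (Fin d)) (y : Fin d → Ω) :
    0 < marg p S y := by
  classical
  unfold marg
  apply Finset.sum_pos'
  · intro x _
    split
    · exact (hppos x).le
    · exact le_refl 0
  · refine ⟨y, Finset.mem_univ y, ?_⟩
    simp [hppos y]

lemma marg_congr {d : ℕ} {Ω : Type} [Fintype Ω] (p q : (Fin d → Ω) → ℝ)
    (h : ∀ x, p x = q x) (S : Finset (Fin d)) (y : Fin d → Ω) :
    marg p S y = marg q S y := by
  unfold marg
  exact Finset.sum_congr rfl (fun x _ => by rw [h x])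

/-- Key splitting lemma: if `p = f·g` with `f` local to `S` and `g` local to `T`,
`S ∪ T = V`, then the marginal on any `U ⊇ S ∩ T` factorizes. -/
lemma marg_split {d : ℕ} {Ω : Type} [Fintype Ω]
    (f g : (Fin d → Ω) → ℝ) (S T : Finset (Fin d))
    (hST : ∀ i, i ∈ S ∨ i ∈ T)
    (hf : ∀ x x' : Fin d → Ω, (∀ i ∈ S, x i = x' i) → f x = f x')
    (hg : ∀ x x' : Fin d → Ω, (∀ i ∈ T, x i = x' i) → g x = g x')
    (U : Finset (Fin d)) (hC : S ∩ T ⊆ U) (y : Fin d → Ω) :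
    marg (fun x => f x * g x) U y * marg (fun x => f x * g x) (S ∩ T) y
      = marg (fun x => f x * g x) (U ∩ S) y * marg (fun x => f x * g x) (U ∩ T) y := by
  classical
  set p : (Fin d → Ω) → ℝ := fun x => f x * g x with hp
  have expand : ∀ P Q : Finset (Fin d),
      marg p P y * marg p Q y = ∑ z : (Fin d → Ω) × (Fin d → Ω),
        (if ∀ i ∈ P, z.1 i = y i then p z.1 else 0) *
        (if ∀ i ∈ Q, z.2 i = y i then p z.2 else 0) := by
    intro P Q
    rw [Fintype.sum_prod_type]
    unfold marg
    rw [Finset.sum_mul_sum]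
  rw [expand U (S ∩ T), expand (U ∩ S) (U ∩ T)]
  -- the merging involution on pairs
  set m : ((Fin d → Ω) × (Fin d → Ω)) → ((Fin d → Ω) × (Fin d → Ω)) :=
    fun z => (fun i => if i ∈ S then z.1 i else z.2 i,
              fun i => if i ∈ S then z.2 i else z.1 i) with hm
  have hinv : Function.Involutive m := by
    intro z
    apply Prod.ext <;> funext i <;> by_cases hi : i ∈ S <;> simp [hm, hi]
  refine (Fintype.sum_equiv hinv.toPerm _ _ ?_).symm
  rintro ⟨x₁, x₂⟩
  simp only [Function.Involutive.coe_toPerm, hm]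
  by_cases h : (∀ i ∈ U ∩ S, x₁ i = y i) ∧ (∀ i ∈ U ∩ T, x₂ i = y i)
  · obtain ⟨h1, h2⟩ := h
    have hz1 : ∀ i ∈ U, (if i ∈ S then x₁ i else x₂ i) = y i := by
      intro i hi
      by_cases hiS : i ∈ S
      · simpa [hiS] using h1 i (Finset.mem_inter.2 ⟨hi, hiS⟩)
      · have hiT : i ∈ T := (hST i).resolve_left hiS
        simpa [hiS] using h2 i (Finset.mem_inter.2 ⟨hi, hiT⟩)
    have hz2 : ∀ i ∈ S ∩ T, (if i ∈ S then x₂ i else x₁ i) = y i := by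
      intro i hi
      have hiS : i ∈ S := (Finset.mem_inter.1 hi).1
      have hiT : i ∈ T := (Finset.mem_inter.1 hi).2
      have hiU : i ∈ U := hC hi
      simpa [hiS] using h2 i (Finset.mem_inter.2 ⟨hiU, hiT⟩)
    rw [if_pos h1, if_pos h2, if_pos hz1, if_pos hz2]
    have hfz1 : f (fun i => if i ∈ S then x₁ i else x₂ i) = f x₁ :=
      hf _ _ (fun i hi => by simp [hi])
    have hfz2 : f (fun i => if i ∈ S then x₂ i else x₁ i) = f x₂ :=
      hf _ _ (fun i hi => by simp [hi])
    have hgz1 : g (fun i => if i ∈ S then x₁ i else x₂ i) = g x₂ := by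
      refine hg _ _ (fun i hi => ?_)
      by_cases hiS : i ∈ S
      · have hiC : i ∈ S ∩ T := Finset.mem_inter.2 ⟨hiS, hi⟩
        have e1 : x₁ i = y i := h1 i (Finset.mem_inter.2 ⟨hC hiC, hiS⟩)
        have e2 : x₂ i = y i := h2 i (Finset.mem_inter.2 ⟨hC hiC, hi⟩)
        simp [hiS, e1, e2]
      · simp [hiS]
    have hgz2 : g (fun i => if i ∈ S then x₂ i else x₁ i) = g x₁ := by
      refine hg _ _ (fun i hi => ?_)
      by_cases hiS : i ∈ S
      · have hiC : i ∈ S ∩ T := Finset.mem_inter.2 ⟨hiS, hi⟩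
        have e1 : x₁ i = y i := h1 i (Finset.mem_inter.2 ⟨hC hiC, hiS⟩)
        have e2 : x₂ i = y i := h2 i (Finset.mem_inter.2 ⟨hC hiC, hi⟩)
        simp [hiS, e1, e2]
      · simp [hiS]
    simp only [hp]
    rw [hfz1, hfz2, hgz1, hgz2]
    ring
  · -- neither side's conditions hold
    have hLz : ¬ ((∀ i ∈ U, (if i ∈ S then x₁ i else x₂ i) = y i) ∧
        (∀ i ∈ S ∩ T, (if i ∈ S then x₂ i else x₁ i) = y i)) := by
      rintro ⟨hz1, hz2⟩
      apply h
      constructor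
      · intro i hi
        obtain ⟨hiU, hiS⟩ := Finset.mem_inter.1 hi
        simpa [hiS] using hz1 i hiU
      · intro i hi
        obtain ⟨hiU, hiT⟩ := Finset.mem_inter.1 hi
        by_cases hiS : i ∈ S
        · simpa [hiS] using hz2 i (Finset.mem_inter.2 ⟨hiS, hiT⟩)
        · simpa [hiS] using hz1 i hiU
    rw [not_and_or] at h hLz
    rcases h with h | h
    · rw [if_neg h]
      rcases hLz with hL | hL
      · rw [if_neg hL]; ring
      · rw [if_neg hL]; ring
    · rw [if_neg h]
      rcases hLz with hL | hL
      · rw [if_neg hL]; ring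
      · rw [if_neg hL]; ring

/-- for a strictly positive discrete distribution, factorization over the
maximal cliques of a graph `G` implies the global Markov property: if `C` separates `A`
from `B` in `G` (with `A`, `B`, `C` disjoint) and `P(X_V) = ∏_K ψ_K(X_K)` with positive
factors `ψ_K` depending only on the coordinates in `K`, then
`P(X_{A∪B∪C}) = P(X_{A∪C}) P(X_{B∪C}) / P(X_C)`. -/
theorem factorization_implies_global_markov
    {d : ℕ} {Ω : Type} [Fintype Ω] (p : (Fin d → Ω) → ℝ)
    (hp : IsProb p) (hppos : ∀ y, 0 < p y)
    (G : SimpleGraph (Fin d))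
    (ψ : Finset (Fin d) → (Fin d → Ω) → ℝ)
    (hψpos : ∀ K y, 0 < ψ K y)
    (hψloc : ∀ K : Finset (Fin d), ∀ y y' : Fin d → Ω,
      (∀ i ∈ K, y i = y' i) → ψ K y = ψ K y')
    (hfact : ∀ y, p y = ∏ K ∈ Finset.univ.powerset.filter (fun s => MaxClique G s), ψ K y)
    (A B C : Finset (Fin d))
    (hAB : Disjoint A B) (hAC : Disjoint A C) (hBC : Disjoint B C)
    (hsep : Separates G A B C) :
    ∀ y, marg p (A ∪ B ∪ C) y = marg p (A ∪ C) y * marg p (B ∪ C) y / marg p C y := by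
  classical
  intro y
  -- A* : vertices reachable from A by a walk avoiding C
  set Astar : Finset (Fin d) :=
    Finset.univ.filter (fun v => ∃ a ∈ A, ∃ w : G.Walk a v, ∀ u ∈ w.support, u ∉ C)
    with hAstar
  have hA_sub : A ⊆ Astar := by
    intro a ha
    refine Finset.mem_filter.2 ⟨Finset.mem_univ _, a, ha, SimpleGraph.Walk.nil, ?_⟩
    intro u hu
    simp only [SimpleGraph.Walk.support_nil, List.mem_singleton] at hu
    subst hu
    exact fun hc => (Finset.disjoint_left.1 hAC) ha hc
  have hAstarC : ∀ v ∈ Astar, v ∉ C := by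
    intro v hv hvC
    obtain ⟨-, a, ha, w, hw⟩ := Finset.mem_filter.1 hv
    exact hw v (SimpleGraph.Walk.end_mem_support w) hvC
  have hB_Astar : ∀ b ∈ B, b ∉ Astar := by
    intro b hb hbA
    obtain ⟨-, a, ha, w, hw⟩ := Finset.mem_filter.1 hbA
    obtain ⟨v, hv, hvC⟩ := hsep a ha b hb w
    exact hw v hv hvC
  set S : Finset (Fin d) := Astar ∪ C with hS
  set T : Finset (Fin d) := Astarᶜ with hT
  have hST : ∀ i, i ∈ S ∨ i ∈ T := by
    intro i
    by_cases hi : i ∈ Astar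
    · exact Or.inl (Finset.mem_union_left _ hi)
    · exact Or.inr (Finset.mem_compl.2 hi)
  have hSinterT : S ∩ T = C := by
    ext i
    simp only [hS, hT, Finset.mem_inter, Finset.mem_union, Finset.mem_compl]
    constructor
    · rintro ⟨hi1 | hi1, hi2⟩
      · exact absurd hi1 hi2
      · exact hi1
    · intro hi
      exact ⟨Or.inr hi, fun hA' => hAstarC i hA' hi⟩
  -- every maximal clique is contained in S or in T
  have hclique : ∀ K : Finset (Fin d), G.IsClique ↑K → ¬ K ⊆ S → K ⊆ T := by
    intro K hK hKS v hv
    rw [hT, Finset.mem_compl]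
    intro hvA
    apply hKS
    intro u hu
    by_cases huA : u ∈ Astar
    · exact Finset.mem_union_left _ huA
    by_cases huC : u ∈ C
    · exact Finset.mem_union_right _ huC
    exfalso
    apply huA
    have hne : v ≠ u := by
      rintro rfl; exact huA hvA
    have hadj : G.Adj v u := hK hv hu hne
    obtain ⟨-, a, ha, w, hw⟩ := Finset.mem_filter.1 hvA
    refine Finset.mem_filter.2 ⟨Finset.mem_univ _, a, ha, w.concat hadj, ?_⟩
    intro x hx
    rw [SimpleGraph.Walk.support_concat, List.mem_append] at hx
    rcases hx with hx | hx
    · exact hw x hx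
    · simp only [List.mem_singleton] at hx
      subst hx
      exact huC
  -- split the factorization into an S-local and a T-local part
  set cliques := Finset.univ.powerset.filter (fun s => MaxClique G s) with hcl
  set f : (Fin d → Ω) → ℝ := fun x => ∏ K ∈ cliques.filter (fun K => K ⊆ S), ψ K x with hf
  set g : (Fin d → Ω) → ℝ := fun x => ∏ K ∈ cliques.filter (fun K => ¬ K ⊆ S), ψ K x with hg
  have hpfg : ∀ x, p x = f x * g x := by
    intro x
    rw [hfact x, hf, hg]
    exact (Finset.prod_filter_mul_prod_filter_not cliques _ _).symm
  have hfloc : ∀ x x' : Fin d → Ω, (∀ i ∈ S, x i = x' i) → f x = f x' := by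
    intro x x' hxx'
    refine Finset.prod_congr rfl (fun K hK => ?_)
    have hKS : K ⊆ S := (Finset.mem_filter.1 hK).2
    exact hψloc K x x' (fun i hi => hxx' i (hKS hi))
  have hgloc : ∀ x x' : Fin d → Ω, (∀ i ∈ T, x i = x' i) → g x = g x' := by
    intro x x' hxx'
    refine Finset.prod_congr rfl (fun K hK => ?_)
    have hKmem := Finset.mem_filter.1 hK
    have hKcl : G.IsClique ↑K := ((Finset.mem_filter.1 hKmem.1).2).1
    have hKT : K ⊆ T := hclique K hKcl hKmem.2
    exact hψloc K x x' (fun i hi => hxx' i (hKT hi))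
  -- identify the intersections
  have hUS : (A ∪ B ∪ C) ∩ S = A ∪ C := by
    ext i
    simp only [Finset.mem_inter, Finset.mem_union, hS]
    constructor
    · rintro ⟨hi1 | hi1, hi2⟩
      · rcases hi1 with hi1 | hi1
        · exact Or.inl hi1
        · rcases hi2 with hi2 | hi2
          · exact absurd hi2 (hB_Astar i hi1)
          · exact Or.inr hi2
      · exact Or.inr hi1
    · rintro (hi | hi)
      · exact ⟨Or.inl (Or.inl hi), Or.inl (hA_sub hi)⟩
      · exact ⟨Or.inr hi, Or.inr hi⟩
  have hUT : (A ∪ B ∪ C) ∩ T = B ∪ C := by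
    ext i
    simp only [Finset.mem_inter, Finset.mem_union, hT, Finset.mem_compl]
    constructor
    · rintro ⟨hi1 | hi1, hi2⟩
      · rcases hi1 with hi1 | hi1
        · exact absurd (hA_sub hi1) hi2
        · exact Or.inl hi1
      · exact Or.inr hi1
    · rintro (hi | hi)
      · exact ⟨Or.inl (Or.inr hi), hB_Astar i hi⟩
      · exact ⟨Or.inr hi, fun hA' => hAstarC i hA' hi⟩
  have hCU : S ∩ T ⊆ A ∪ B ∪ C := by
    rw [hSinterT]
    exact Finset.subset_union_right
  have key := marg_split f g S T hST hfloc hgloc (A ∪ B ∪ C) hCU y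
  rw [hSinterT, hUS, hUT] at key
  have hmargp : ∀ W : Finset (Fin d), marg (fun x => f x * g x) W y = marg p W y :=
    fun W => marg_congr _ _ (fun x => (hpfg x).symm) W y
  rw [hmargp, hmargp, hmargp, hmargp] at key
  have hCpos : 0 < marg p C y := marg_pos p hppos C y
  rw [eq_div_iff hCpos.ne']
  exact key

end TCherryPaper
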